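/- For PSD matrices Q and weights β ∈ (0,1), if random matrices E_1,...,E_t ∈ R^{m×n} are uncorrelated across time with E[E_s E_r^T] = 0 for s ≠ r and E[E_s E_s^T] ⪯ Q² for each s, then E||Σ_{s=1}^t β^{t−s} E_s||_* ≤ tr(√(Σ_{s=1}^t β^{2(t−s)} Q²)) = ||Q||_* / √(1−β²) in the limit; in particular E||Σ_{s=1}^t β^{t−s} E_s||_* ≤ ||Q||_*/√(1−β²). -/

import Mathlib

open Matrix Finset MeasureTheory ProbabilityTheory
open scoped Classical

noncomputable def psqrt {m : ℕ} (A : Matrix (Fin m) (Fin m) ℝ) : Matrix (Fin m) (Fin m) ℝ :=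
  if h : A.PosSemidef then
    (h.1.eigenvectorUnitary : Matrix (Fin m) (Fin m) ℝ) * diagonal (fun i => Real.sqrt (h.1.eigenvalues i)) *
      (star h.1.eigenvectorUnitary : Matrix (Fin m) (Fin m) ℝ)
  else 0

noncomputable def nuclearNorm {m : ℕ} {n : Type*} [Fintype n]
    (A : Matrix (Fin m) n ℝ) : ℝ :=
  (psqrt (A * Aᵀ)).trace
variable {k : ℕ}

lemma psqrt_spec {A : Matrix (Fin k) (Fin k) ℝ} (h : A.PosSemidef) :
    (psqrt A).PosSemidef ∧ psqrt A * psqrt A = A := by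
  rw [psqrt, dif_pos h]
  have hA := h.1.spectral_theorem
  simp only [Unitary.conjStarAlgAut_apply, RCLike.ofReal_real_eq_id, Function.id_comp] at hA
  have hd := h.eigenvalues_nonneg
  generalize h.1.eigenvectorUnitary = U at hA ⊢
  generalize h.1.eigenvalues = d at hA hd ⊢
  have hUs : (star U : Matrix (Fin k) (Fin k) ℝ) = (U : Matrix (Fin k) (Fin k) ℝ)ᴴ := by
    rfl
  have hUU : (U : Matrix (Fin k) (Fin k) ℝ)ᴴ * U = 1 := by rw [← hUs]; exact Unitary.coe_star_mul_self _
  rw [hUs] at hA ⊢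
  have hD : (diagonal (fun i => Real.sqrt (d i))).PosSemidef :=
    posSemidef_diagonal_iff.mpr fun i => Real.sqrt_nonneg _
  refine ⟨hD.mul_mul_conjTranspose_same _, ?_⟩
  calc _ = (U : Matrix (Fin k) (Fin k) ℝ) * (diagonal (fun i => Real.sqrt (d i)) * ((U : Matrix (Fin k) (Fin k) ℝ)ᴴ * U) * diagonal (fun i => Real.sqrt (d i))) * (U : Matrix (Fin k) (Fin k) ℝ)ᴴ := by
        simp only [Matrix.mul_assoc]
    _ = _ := by
        rw [hUU, Matrix.mul_one, diagonal_mul_diagonal, hA]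
        congr 2; ext i j; simp [Real.mul_self_sqrt (hd _)]


lemma psd_smul {A : Matrix (Fin k) (Fin k) ℝ} (hA : A.PosSemidef) {c : ℝ} (hc : 0 ≤ c) :
    (c • A).PosSemidef := by
  refine ⟨?_, fun x => ?_⟩
  · unfold Matrix.IsHermitian
    rw [conjTranspose_smul, hA.1.eq]
    simp
  · exact (hA.smul hc).2 x

lemma psd_trace_nonneg {A : Matrix (Fin k) (Fin k) ℝ} (hA : A.PosSemidef) : 0 ≤ A.trace := by
  rw [Matrix.trace]
  refine Finset.sum_nonneg fun i _ => ?_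
  simpa [Matrix.diag] using hA.2 (Finsupp.single i 1)

lemma trace_mul_nonneg' {A B : Matrix (Fin k) (Fin k) ℝ} (hA : A.PosSemidef)
    (hB : B.PosSemidef) : 0 ≤ (A * B).trace := by
  obtain ⟨C, rfl⟩ : ∃ C : Matrix (Fin k) (Fin k) ℝ, B = Cᴴ * C :=
    ⟨psqrt B, by rw [(psqrt_spec hB).1.1.eq, (psqrt_spec hB).2]⟩
  have h1 : (A * (Cᴴ * C)).trace = (C * A * Cᴴ).trace := by
    rw [← Matrix.mul_assoc, Matrix.trace_mul_cycle]
  rw [h1]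
  exact psd_trace_nonneg (hA.mul_mul_conjTranspose_same C)

lemma key_var {S M : Matrix (Fin k) (Fin k) ℝ} (hS : S.PosDef) (hM : M.PosSemidef) :
    (psqrt M).trace ≤ ((S⁻¹ * M).trace + S.trace) / 2 := by
  have hspec := psqrt_spec hM
  set X := psqrt M with hXdef
  have hX := hspec.1
  have hXX : X * X = M := hspec.2
  have hdet : IsUnit S.det := hS.det_pos.ne'.isUnit
  have hinv : S⁻¹ * S = 1 := Matrix.nonsing_inv_mul _ hdet
  have hinv' : S * S⁻¹ = 1 := Matrix.mul_nonsing_inv _ hdet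
  have hXS : ((X - S) * (X - S)).PosSemidef := by
    have h1 : (X - S).IsHermitian := hX.1.sub hS.isHermitian
    have := Matrix.posSemidef_conjTranspose_mul_self (X - S)
    rwa [h1.eq] at this
  have h0 : 0 ≤ (S⁻¹ * ((X - S) * (X - S))).trace :=
    trace_mul_nonneg' hS.inv.posSemidef hXS
  have hexp : (S⁻¹ * ((X - S) * (X - S))).trace
      = (S⁻¹ * M).trace + S.trace - 2 * X.trace := by
    have e1 : S⁻¹ * ((X - S) * (X - S))
        = S⁻¹ * M - S⁻¹ * X * S - X + S := by
      have hsx : S⁻¹ * (S * (X - S)) = X - S := by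
        rw [← Matrix.mul_assoc, hinv, Matrix.one_mul]
      rw [sub_mul, mul_sub, hsx, mul_sub, mul_sub]
      rw [show S⁻¹ * (X * X) = S⁻¹ * M from by rw [hXX]]
      rw [← Matrix.mul_assoc S⁻¹ X S]
      abel
    rw [e1, Matrix.trace_add, Matrix.trace_sub, Matrix.trace_sub]
    have e2 : (S⁻¹ * X * S).trace = X.trace := by
      rw [Matrix.trace_mul_cycle, hinv', Matrix.one_mul]
    rw [e2]; ring
  linarith

lemma psd_sum {ι : Type*} (s : Finset ι) (f : ι → Matrix (Fin k) (Fin k) ℝ)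
    (h : ∀ i ∈ s, (f i).PosSemidef) : (∑ i ∈ s, f i).PosSemidef := by
  classical
  refine Finset.sum_induction f _ (fun a b ha hb => ha.add hb) Matrix.PosSemidef.zero h

lemma posdef_smul {A : Matrix (Fin k) (Fin k) ℝ} (hA : A.PosDef) {c : ℝ} (hc : 0 < c) :
    (c • A).PosDef := by
  refine ⟨?_, fun x hx => ?_⟩
  · unfold Matrix.IsHermitian
    rw [conjTranspose_smul, hA.isHermitian.eq]
    simp
  · exact (hA.smul hc).2 hx

/-- if random matrices `E 1, …, E t` are uncorrelated across time
(`E[E_s E_rᵀ] = 0` for `s ≠ r`) with `E[E_s E_sᵀ] ⪯ Q²` for a PSD matrix `Q`, then for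
`β ∈ (0,1)`, `E‖∑_{s=1}^t β^{t−s} E_s‖_* ≤ tr(√(∑ β^{2(t−s)} Q²)) ≤ ‖Q‖_*/√(1−β²)`,
where `‖Q‖_* = tr Q` since `Q` is PSD. -/
theorem stmt19 {Ω : Type*} [MeasurableSpace Ω] (P : Measure Ω) [IsProbabilityMeasure P]
    {m n : ℕ} (t : ℕ) (β : ℝ) (hβ0 : 0 < β) (hβ1 : β < 1)
    (Q : Matrix (Fin m) (Fin m) ℝ) (hQ : Q.PosSemidef)
    (Ecal : ℕ → Ω → Matrix (Fin m) (Fin n) ℝ)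
    (hmeas : ∀ s i j, Measurable fun ω => Ecal s ω i j)
    (hint : ∀ s r i j, Integrable (fun ω => (Ecal s ω * (Ecal r ω)ᵀ) i j) P)
    (hintnn : Integrable
      (fun ω => nuclearNorm (∑ s ∈ Finset.Icc 1 t, β ^ (t - s) • Ecal s ω)) P)
    -- uncorrelated across time
    (huncorr : ∀ s r, s ≠ r → ∀ i j, ∫ ω, (Ecal s ω * (Ecal r ω)ᵀ) i j ∂P = 0)
    -- second moment bound `E[E_s E_sᵀ] ⪯ Q²`
    (hmom : ∀ s, (Q * Q -
      Matrix.of fun i j => ∫ ω, (Ecal s ω * (Ecal s ω)ᵀ) i j ∂P).PosSemidef) :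
    ∫ ω, nuclearNorm (∑ s ∈ Finset.Icc 1 t, β ^ (t - s) • Ecal s ω) ∂P
      ≤ Q.trace / Real.sqrt (1 - β ^ 2) := by
  have hb2 : 0 < 1 - β ^ 2 := by nlinarith
  set a : ℝ := (Real.sqrt (1 - β ^ 2))⁻¹ with ha
  have hsq : 0 < Real.sqrt (1 - β ^ 2) := Real.sqrt_pos.mpr hb2
  have ha0 : 0 < a := inv_pos.mpr hsq
  have ha2 : a ^ 2 = (1 - β ^ 2)⁻¹ := by
    rw [ha, inv_pow, Real.sq_sqrt hb2.le]
  set c : ℕ → ℝ := fun s => β ^ (t - s) with hc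
  set A : Ω → Matrix (Fin m) (Fin n) ℝ := fun ω => ∑ s ∈ Finset.Icc 1 t, c s • Ecal s ω
    with hA
  -- expansion of A Aᵀ
  have hMmat : ∀ ω, A ω * (A ω)ᵀ
      = ∑ s ∈ Finset.Icc 1 t, ∑ r ∈ Finset.Icc 1 t,
          (c s * c r) • (Ecal s ω * (Ecal r ω)ᵀ) := by
    intro ω
    simp only [hA]
    rw [Matrix.transpose_sum, Matrix.sum_mul]
    refine Finset.sum_congr rfl fun s hs => ?_
    rw [Matrix.mul_sum]
    refine Finset.sum_congr rfl fun r hr => ?_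
    rw [Matrix.transpose_smul, Matrix.smul_mul, Matrix.mul_smul, smul_smul]
  have hMpsd : ∀ ω, (A ω * (A ω)ᵀ).PosSemidef := by
    intro ω
    have := Matrix.posSemidef_self_mul_conjTranspose (A ω)
    rwa [Matrix.conjTranspose_eq_transpose_of_trivial] at this
  have hintM : ∀ i j, Integrable (fun ω => (A ω * (A ω)ᵀ) i j) P := by
    intro i j
    simp_rw [hMmat, Matrix.sum_apply, Matrix.smul_apply, smul_eq_mul]
    refine integrable_finset_sum _ fun s _ => integrable_finset_sum _ fun r _ => ?_
    exact (hint s r i j).const_mul _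
  -- expected value of A Aᵀ
  set EM : Matrix (Fin m) (Fin m) ℝ :=
    Matrix.of fun i j => ∫ ω, (A ω * (A ω)ᵀ) i j ∂P with hEMdef
  set C : ℕ → Matrix (Fin m) (Fin m) ℝ :=
    fun s => Matrix.of fun i j => ∫ ω, (Ecal s ω * (Ecal s ω)ᵀ) i j ∂P with hCdef
  have hEM : EM = ∑ s ∈ Finset.Icc 1 t, (c s) ^ 2 • C s := by
    ext i j
    rw [hEMdef]
    simp only [Matrix.of_apply, Matrix.sum_apply, Matrix.smul_apply, smul_eq_mul]
    simp_rw [hMmat, Matrix.sum_apply, Matrix.smul_apply, smul_eq_mul]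
    rw [integral_finset_sum _ fun s _ => integrable_finset_sum _
      fun r _ => ((hint s r i j).const_mul _)]
    refine Finset.sum_congr rfl fun s hs => ?_
    rw [integral_finset_sum _ fun r _ => ((hint s r i j).const_mul _)]
    rw [Finset.sum_eq_single_of_mem s hs]
    · rw [integral_const_mul, hCdef]
      simp only [Matrix.of_apply]
      ring
    · intro r hr hrs
      rw [integral_const_mul, huncorr s r (fun h => hrs h.symm) i j, mul_zero]
  -- key constant
  set cc : ℝ := ∑ s ∈ Finset.Icc 1 t, (c s) ^ 2 with hccdef
  have hccle : cc ≤ a ^ 2 := by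
    rw [ha2, hccdef]
    have h1 : ∑ s ∈ Finset.Icc 1 t, (c s) ^ 2
        = ∑ k ∈ Finset.range t, (β ^ 2) ^ k := by
      refine Finset.sum_nbij' (fun s => t - s) (fun k => t - k) ?_ ?_ ?_ ?_ ?_
      · intro s hs
        simp only [Finset.mem_Icc] at hs
        simp only [Finset.mem_range]
        omega
      · intro k hk
        simp only [Finset.mem_range] at hk
        simp only [Finset.mem_Icc]
        omega
      · intro s hs; simp only [Finset.mem_Icc] at hs
        show t - (t - s) = s; omega
      · intro k hk; simp only [Finset.mem_range] at hk
        show t - (t - k) = k; omega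
      · intro s hs
        rw [hc]
        simp only
        rw [← pow_mul, ← pow_mul, mul_comm]
    rw [h1]
    have h2 : (0:ℝ) ≤ β ^ 2 := sq_nonneg β
    have h3 : β ^ 2 < 1 := by nlinarith
    calc ∑ k ∈ Finset.range t, (β ^ 2) ^ k
        ≤ ∑' k : ℕ, (β ^ 2) ^ k :=
          Summable.sum_le_tsum _ (fun k _ => pow_nonneg h2 k) (summable_geometric_of_lt_one h2 h3)
      _ = (1 - β ^ 2)⁻¹ := tsum_geometric_of_lt_one h2 h3
  have hccnn : 0 ≤ cc := Finset.sum_nonneg fun s _ => sq_nonneg _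
  -- Q*Q is PSD
  have hQ2 : (Q * Q).PosSemidef := by
    have := Matrix.posSemidef_conjTranspose_mul_self Q
    rwa [hQ.1.eq] at this
  -- main epsilon claim
  have main : ∀ ε : ℝ, 0 < ε →
      (∫ ω, nuclearNorm (A ω) ∂P) ≤ a * Q.trace + ε * (m : ℝ) / 2 := by
    intro ε hε
    set R : Matrix (Fin m) (Fin m) ℝ := a • Q with hRdef
    have hR : R.PosSemidef := psd_smul hQ ha0.le
    set S : Matrix (Fin m) (Fin m) ℝ := R + ε • 1 with hSdef
    have hS : S.PosDef := Matrix.PosDef.posSemidef_add hR (posdef_smul Matrix.PosDef.one hε)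
    have hdet : IsUnit S.det := hS.det_pos.ne'.isUnit
    have hinv : S⁻¹ * S = 1 := Matrix.nonsing_inv_mul _ hdet
    have hSinv : (S⁻¹).PosSemidef := hS.inv.posSemidef
    -- pointwise bound
    have hpt : ∀ ω, nuclearNorm (A ω)
        ≤ ((S⁻¹ * (A ω * (A ω)ᵀ)).trace + S.trace) / 2 := by
      intro ω
      exact key_var hS (hMpsd ω)
    -- integrability of the RHS
    have htr : ∀ ω, (S⁻¹ * (A ω * (A ω)ᵀ)).trace
        = ∑ i : Fin m, ∑ j : Fin m, S⁻¹ i j * (A ω * (A ω)ᵀ) j i := by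
      intro ω
      rw [Matrix.trace]
      refine Finset.sum_congr rfl fun i _ => ?_
      rw [Matrix.diag, Matrix.mul_apply]
    have hintR : Integrable (fun ω => ((S⁻¹ * (A ω * (A ω)ᵀ)).trace + S.trace) / 2) P := by
      simp_rw [htr]
      apply Integrable.div_const
      refine Integrable.add ?_ (integrable_const _)
      refine integrable_finset_sum _ fun i _ => integrable_finset_sum _ fun j _ => ?_
      exact (hintM j i).const_mul _
    have hstep1 : (∫ ω, nuclearNorm (A ω) ∂P)
        ≤ ∫ ω, ((S⁻¹ * (A ω * (A ω)ᵀ)).trace + S.trace) / 2 ∂P := by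
      refine integral_mono hintnn hintR hpt
    have hstep2 : (∫ ω, ((S⁻¹ * (A ω * (A ω)ᵀ)).trace + S.trace) / 2 ∂P)
        = ((S⁻¹ * EM).trace + S.trace) / 2 := by
      have hintT : Integrable (fun ω => (S⁻¹ * (A ω * (A ω)ᵀ)).trace) P := by
        simp_rw [htr]
        refine integrable_finset_sum _ fun i _ => integrable_finset_sum _ fun j _ => ?_
        exact (hintM j i).const_mul _
      rw [integral_div, integral_add hintT (integrable_const _), integral_const]
      simp only [probReal_univ, one_smul]
      congr 2
      simp_rw [htr]
      refine (integral_finset_sum _ fun i _ => integrable_finset_sum _ fun j _ =>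
        ((hintM j i).const_mul _)).trans ?_
      refine Finset.sum_congr rfl fun i _ => ?_
      refine (integral_finset_sum _ fun j _ => ((hintM j i).const_mul _)).trans ?_
      refine Finset.sum_congr rfl fun j _ => ?_
      rw [integral_const_mul]
      rfl
    -- bound on trace (S⁻¹ * EM)
    have hb1 : (S⁻¹ * EM).trace ≤ (S⁻¹ * (cc • (Q * Q))).trace := by
      have hdiff : (cc • (Q * Q) - EM).PosSemidef := by
        rw [hEM, hccdef, Finset.sum_smul, ← Finset.sum_sub_distrib]
        refine psd_sum _ _ fun s _ => ?_
        rw [← smul_sub]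
        exact psd_smul (hmom s) (sq_nonneg _)
      have h0 := trace_mul_nonneg' hSinv hdiff
      rw [Matrix.mul_sub, Matrix.trace_sub] at h0
      linarith
    have hb2' : (S⁻¹ * (cc • (Q * Q))).trace ≤ a ^ 2 * (S⁻¹ * (Q * Q)).trace := by
      rw [mul_smul_comm, Matrix.trace_smul, smul_eq_mul]
      have h0 := trace_mul_nonneg' hSinv hQ2
      nlinarith
    have hRR : R * R = a ^ 2 • (Q * Q) := by
      rw [hRdef, smul_mul_assoc, mul_smul_comm, smul_smul, sq]
    have hb3 : a ^ 2 * (S⁻¹ * (Q * Q)).trace = (S⁻¹ * (R * R)).trace := by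
      rw [hRR, mul_smul_comm, Matrix.trace_smul, smul_eq_mul]
    have hb4 : (S⁻¹ * (R * R)).trace ≤ R.trace := by
      have hSR : S * R = R * R + ε • R := by
        have h1 : (ε • (1 : Matrix (Fin m) (Fin m) ℝ)) * R = ε • R := by
          rw [smul_mul_assoc, Matrix.one_mul]
        rw [hSdef, Matrix.add_mul, h1]
      have h1 : (S⁻¹ * (S * R)).trace = R.trace := by
        rw [← Matrix.mul_assoc, hinv, Matrix.one_mul]
      rw [hSR, Matrix.mul_add, Matrix.trace_add] at h1
      have h2 : 0 ≤ (S⁻¹ * (ε • R)).trace := by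
        refine trace_mul_nonneg' hSinv (psd_smul hR hε.le)
      linarith
    have hRtr : R.trace = a * Q.trace := by rw [hRdef, Matrix.trace_smul, smul_eq_mul]
    have hStr : S.trace = a * Q.trace + ε * (m : ℝ) := by
      have h1 : (ε • (1 : Matrix (Fin m) (Fin m) ℝ)).trace = ε * (m : ℝ) := by
        rw [Matrix.trace_smul, Matrix.trace_one, smul_eq_mul, Fintype.card_fin]
      rw [hSdef, Matrix.trace_add, h1, hRtr]
    calc (∫ ω, nuclearNorm (A ω) ∂P)
        ≤ ((S⁻¹ * EM).trace + S.trace) / 2 := hstep2 ▸ hstep1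
      _ ≤ (a * Q.trace + (a * Q.trace + ε * (m : ℝ))) / 2 := by
          have := hb1.trans (hb2'.trans_eq hb3) |>.trans hb4
          rw [hRtr] at this
          rw [hStr]
          linarith
      _ = a * Q.trace + ε * (m : ℝ) / 2 := by ring
  -- conclude
  have hgoal : Q.trace / Real.sqrt (1 - β ^ 2) = a * Q.trace := by
    rw [ha, div_eq_mul_inv, mul_comm]
  rw [hgoal]
  refine le_of_forall_pos_le_add fun δ hδ => ?_
  have hm1 : (0:ℝ) < (m : ℝ) + 1 := by positivity
  have h := main (2 * δ / ((m : ℝ) + 1)) (by positivity)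
  refine h.trans ?_
  have : 2 * δ / ((m : ℝ) + 1) * (m : ℝ) / 2 ≤ δ := by
    rw [div_mul_eq_mul_div, div_div]
    rw [div_le_iff₀ (by positivity)]
    nlinarith [Nat.cast_nonneg (α := ℝ) m]
  linarith
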